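/- Let F : X → Y be Fréchet differentiable between Hilbert spaces with F(u*) = φ, satisfying the weak tangential cone condition 2⟨F(u) − F(u*), F'(u)(u − u*)⟩ ≥ (M² + μ)‖F(u) − F(u*)‖² and the coercivity ‖u − u*‖ ≤ C‖F(u) − F(u*)‖ on a ball B. Then J(u) = ‖F(u) − φ‖² satisfies the Polyak–Łojasiewicz inequality on B: ‖J'(u)‖² ≥ ((M² + μ)²/C²)·J(u), where J'(u) = 2F'(u)*(F(u) − φ) and min J = 0. -/
import Mathlib


open RealInnerProductSpace

/-- The weak tangential cone condition together with coercivity (`α = 1`)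
implies the Polyak–Łojasiewicz inequality for `J(u) = ‖F(u) − φ‖²`. -/
theorem pl_from_wtcc_and_coercivity
    {X Y : Type*} [NormedAddCommGroup X] [InnerProductSpace ℝ X] [CompleteSpace X]
    [NormedAddCommGroup Y] [InnerProductSpace ℝ Y] [CompleteSpace Y]
    (F : X → Y) (F' : X → X →L[ℝ] Y) (hF : ∀ u, HasFDerivAt F (F' u) u)
    (B : Set X) (ustar : X) (φ : Y) (hsol : F ustar = φ) (hustar : ustar ∈ B)
    (M μ C : ℝ) (hM : 0 < M) (hμ : 0 < μ) (hC : 0 < C)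
    (htcc : ∀ u ∈ B,
      2 * ⟪F u - F ustar, F' u (u - ustar)⟫ ≥ (M ^ 2 + μ) * ‖F u - F ustar‖ ^ 2)
    (hcoe : ∀ u ∈ B, ‖u - ustar‖ ≤ C * ‖F u - F ustar‖) :
    ∀ u ∈ B,
      ‖(2 : ℝ) • ContinuousLinearMap.adjoint (F' u) (F u - φ)‖ ^ 2 ≥
        ((M ^ 2 + μ) ^ 2 / C ^ 2) * ‖F u - φ‖ ^ 2 := by
  intro u hu
  set g := ContinuousLinearMap.adjoint (F' u) (F u - φ) with hg
  have h1 : 2 * ⟪F u - φ, F' u (u - ustar)⟫ ≥ (M ^ 2 + μ) * ‖F u - φ‖ ^ 2 := by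
    rw [← hsol]; exact htcc u hu
  have h2 : ⟪F u - φ, F' u (u - ustar)⟫ = ⟪g, u - ustar⟫ :=
    (ContinuousLinearMap.adjoint_inner_left (F' u) (u - ustar) (F u - φ)).symm
  have h3 : ⟪g, u - ustar⟫ ≤ ‖g‖ * ‖u - ustar‖ := real_inner_le_norm _ _
  have h4 : ‖u - ustar‖ ≤ C * ‖F u - φ‖ := by rw [← hsol]; exact hcoe u hu
  have hn2 : ‖(2 : ℝ) • g‖ = 2 * ‖g‖ := by
    rw [norm_smul]; simp
  have hgnn : (0:ℝ) ≤ ‖g‖ := norm_nonneg _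
  have hfnn : (0:ℝ) ≤ ‖F u - φ‖ := norm_nonneg _
  rcases eq_or_lt_of_le hfnn with hf0 | hfpos
  · rw [hn2]
    have : ‖F u - φ‖ = 0 := hf0.symm
    rw [this]
    simp
  · -- (M²+μ)‖f‖² ≤ 2‖g‖ C ‖f‖, so (M²+μ)‖f‖ ≤ 2‖g‖ C
    have key : (M ^ 2 + μ) * ‖F u - φ‖ ≤ 2 * ‖g‖ * C := by
      have h5 : (M ^ 2 + μ) * ‖F u - φ‖ ^ 2 ≤ 2 * (‖g‖ * (C * ‖F u - φ‖)) := by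
        have := mul_le_mul_of_nonneg_left h4 hgnn
        nlinarith [h1, h2, h3]
      nlinarith
    rw [hn2, ge_iff_le, div_mul_eq_mul_div, div_le_iff₀ (by positivity)]
    have hann : (0:ℝ) ≤ (M ^ 2 + μ) * ‖F u - φ‖ := by positivity
    nlinarith [mul_le_mul key key hann (by positivity : (0:ℝ) ≤ 2 * ‖g‖ * C)]
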